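/- Let 0 < a₀ < 1 and c₀ > 0. Let v : ℝ → ℝ be continuously differentiable and suppose there exist R₀ > 0 and C > 0 such that for all R ≥ R₀: v² and (v')² are integrable on (−∞, −R], |∫_{x < −R} v(x)² dx − c₀·R^{−2}| ≤ C·R^{−2−a₀}, and ∫_{x < −R} v'(x)² dx ≤ C·R^{−4}. Then there exist R₁ > 0 and C' > 0 such that for all R ≥ R₁: |v(−R)² − 2·c₀·R^{−3}| ≤ C'·R^{−3−a} with a = a₀/3. -/

import Mathlib

open MeasureTheory

lemma rpow_neg_nat_aux {R : ℝ} (hR : 0 < R) (n : ℕ) : R ^ (-(n:ℝ)) = (R ^ n)⁻¹ := by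
  rw [Real.rpow_neg hR.le, Real.rpow_natCast]

lemma taylor_aux {R h : ℝ} (hR : 0 < R) (hh : 0 < h) (hhR : h ≤ R) :
    |R ^ (-(2:ℝ)) - (R + h) ^ (-(2:ℝ)) - 2 * h * R ^ (-(3:ℝ))| ≤ 5 * h ^ 2 * R ^ (-(4:ℝ)) := by
  have hRh : 0 < R + h := by linarith
  rw [show (-(2:ℝ)) = -((2:ℕ):ℝ) by norm_num, rpow_neg_nat_aux hR, rpow_neg_nat_aux hRh,
    show (-(3:ℝ)) = -((3:ℕ):ℝ) by norm_num, rpow_neg_nat_aux hR,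
    show (-(4:ℝ)) = -((4:ℕ):ℝ) by norm_num, rpow_neg_nat_aux hR]
  have key : (R ^ 2)⁻¹ - ((R + h) ^ 2)⁻¹ - 2 * h * (R ^ 3)⁻¹
      = -(h ^ 2 * (3 * R + 2 * h)) / (R ^ 3 * (R + h) ^ 2) := by
    field_simp
    ring
  rw [key, abs_div, abs_neg, abs_of_nonneg (by positivity), abs_of_nonneg (by positivity),
    show (5:ℝ) * h ^ 2 * (R ^ 4)⁻¹ = 5 * h ^ 2 / R ^ 4 by ring,
    div_le_div_iff₀ (by positivity) (by positivity)]
  have h1 : R ^ 2 ≤ (R + h) ^ 2 := by nlinarith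
  have h2 : 3 * R + 2 * h ≤ 5 * R := by linarith
  calc h ^ 2 * (3 * R + 2 * h) * R ^ 4 ≤ h ^ 2 * (5 * R) * R ^ 4 := by
        have := mul_le_mul_of_nonneg_right (mul_le_mul_of_nonneg_left h2 (sq_nonneg h)) (pow_pos hR 4).le
        linarith
    _ = 5 * h ^ 2 * (R ^ 3 * R ^ 2) := by ring
    _ ≤ 5 * h ^ 2 * (R ^ 3 * (R + h) ^ 2) := by
        have := mul_le_mul_of_nonneg_left (mul_le_mul_of_nonneg_left h1 (pow_pos hR 3).le)
          (by positivity : (0:ℝ) ≤ 5 * h ^ 2)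
        linarith

lemma cs_helper (f g : ℝ → ℝ) (hf : Continuous f) (hg : Continuous g) (a b : ℝ) :
    ∫ x in Set.Ioc a b, |f x| * |g x| ≤
      Real.sqrt (∫ x in Set.Ioc a b, f x ^ 2) * Real.sqrt (∫ x in Set.Ioc a b, g x ^ 2) := by
  set μ := volume.restrict (Set.Ioc a b) with hμ
  have key : ∀ u : ℝ → ℝ, Continuous u → MemLp (fun x => |u x|) 2 μ := by
    intro u hu
    rw [memLp_two_iff_integrable_sq (hu.abs.aestronglyMeasurable)]
    have h2 : IntegrableOn (fun x => u x ^ 2) (Set.Ioc a b) := (hu.pow 2).integrableOn_Ioc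
    simpa [sq_abs] using (show Integrable (fun x => u x ^ 2) μ from h2)
  have hconj : Real.HolderConjugate 2 2 := Real.HolderConjugate.two_two
  have h := integral_mul_le_Lp_mul_Lq_of_nonneg (μ := μ) hconj
    (Filter.Eventually.of_forall fun x => abs_nonneg _)
    (Filter.Eventually.of_forall fun x => abs_nonneg _)
    (by simpa using key f hf) (by simpa using key g hg)
  have e1 : ∀ u : ℝ → ℝ, (∫ x, |u x| ^ (2:ℝ) ∂μ) = ∫ x, u x ^ 2 ∂μ := by
    intro u
    refine integral_congr_ae (Filter.Eventually.of_forall fun x => ?_)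
    show |u x| ^ (2:ℝ) = u x ^ 2
    rw [show ((2:ℝ) = ((2:ℕ):ℝ)) by norm_num, Real.rpow_natCast, sq_abs]
  rw [e1 f, e1 g] at h
  calc ∫ x in Set.Ioc a b, |f x| * |g x| ≤ _ := h
    _ = _ := by
        rw [Real.sqrt_eq_rpow, Real.sqrt_eq_rpow]

lemma ptwise_aux (v : ℝ → ℝ) (hv : ContDiff ℝ 1 v) {x b : ℝ} (hxb : x ≤ b) :
    |v x ^ 2 - v b ^ 2| ≤ 2 * (Real.sqrt (∫ t in Set.Ioc x b, v t ^ 2) *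
      Real.sqrt (∫ t in Set.Ioc x b, deriv v t ^ 2)) := by
  have hvc : Continuous v := hv.continuous
  have hv'c : Continuous (deriv v) := hv.continuous_deriv le_rfl
  have hd : ∀ t : ℝ, HasDerivAt (fun y => v y ^ 2) (2 * v t * deriv v t) t := by
    intro t
    have := ((hv.differentiable one_ne_zero t).hasDerivAt).pow 2
    simpa [mul_comm, Pi.pow_def] using this
  have ftc : ∫ t in x..b, 2 * v t * deriv v t = v b ^ 2 - v x ^ 2 :=
    intervalIntegral.integral_eq_sub_of_hasDerivAt (fun t _ => hd t)
      (((continuous_const.mul hvc).mul hv'c).intervalIntegrable _ _)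
  rw [show |v x ^ 2 - v b ^ 2| = |∫ t in x..b, 2 * v t * deriv v t| by rw [ftc, abs_sub_comm]]
  calc |∫ t in x..b, 2 * v t * deriv v t| ≤ ∫ t in x..b, |2 * v t * deriv v t| :=
        intervalIntegral.abs_integral_le_integral_abs hxb
    _ = ∫ t in Set.Ioc x b, 2 * (|v t| * |deriv v t|) := by
        rw [intervalIntegral.integral_of_le hxb]
        congr 1; funext t; rw [abs_mul, abs_mul, abs_two]; ring
    _ = 2 * ∫ t in Set.Ioc x b, |v t| * |deriv v t| := integral_const_mul 2 _
    _ ≤ _ := by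
        have := cs_helper v (deriv v) hvc hv'c x b
        nlinarith [this]

set_option maxHeartbeats 1000000 in
/-- From integral decay estimates to a pointwise asymptotic: if
`∫_{x<−R} v² = c₀ R⁻² + O(R^{−2−a₀})` and `∫_{x<−R} v'² = O(R⁻⁴)`, then
`v(−R)² = 2 c₀ R⁻³ + O(R^{−3−a₀/3})`. -/
theorem pointwise_from_integral_decay (a₀ c₀ : ℝ) (ha₀ : 0 < a₀) (ha₀1 : a₀ < 1)
    (hc₀ : 0 < c₀) (v : ℝ → ℝ) (hv : ContDiff ℝ 1 v)
    (R₀ C : ℝ) (hR₀ : 0 < R₀) (hC : 0 < C)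
    (hint : ∀ R : ℝ, R₀ ≤ R →
      IntegrableOn (fun x => (v x) ^ 2) (Set.Iio (-R)) ∧
      IntegrableOn (fun x => (deriv v x) ^ 2) (Set.Iio (-R)))
    (hL2 : ∀ R : ℝ, R₀ ≤ R →
      |(∫ x in Set.Iio (-R), (v x) ^ 2) - c₀ * R ^ (-(2 : ℝ))| ≤ C * R ^ (-(2 : ℝ) - a₀))
    (hL2' : ∀ R : ℝ, R₀ ≤ R →
      (∫ x in Set.Iio (-R), (deriv v x) ^ 2) ≤ C * R ^ (-(4 : ℝ))) :
    ∃ R₁ C' : ℝ, 0 < R₁ ∧ 0 < C' ∧ ∀ R : ℝ, R₁ ≤ R →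
      |(v (-R)) ^ 2 - 2 * c₀ * R ^ (-(3 : ℝ))| ≤ C' * R ^ (-(3 : ℝ) - a₀ / 3) := by
  have hvc : Continuous v := hv.continuous
  have hv'c : Continuous (deriv v) := hv.continuous_deriv le_rfl
  set K := 7 * c₀ + 2 * C with hK
  have hKpos : 0 < K := by positivity
  refine ⟨max R₀ 1, 2 * Real.sqrt K * Real.sqrt C + 2 * C + 5 * c₀,
    lt_of_lt_of_le one_pos (le_max_right _ _), by positivity, ?_⟩
  intro R hR
  have hR1 : (1:ℝ) ≤ R := le_trans (le_max_right _ _) hR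
  have hRR₀ : R₀ ≤ R := le_trans (le_max_left _ _) hR
  have hRpos : (0:ℝ) < R := lt_of_lt_of_le one_pos hR1
  set e := (1:ℝ) - 2 * a₀ / 3 with he
  set h := R ^ e with hh
  have hepos : 0 < e := by rw [he]; linarith
  have hhpos : 0 < h := Real.rpow_pos_of_pos hRpos _
  have hhR : h ≤ R := by
    calc h ≤ R ^ (1:ℝ) := Real.rpow_le_rpow_of_exponent_le hR1 (by rw [he]; linarith)
      _ = R := Real.rpow_one R
  have hRhR₀ : R₀ ≤ R + h := by linarith
  have hRhpos : (0:ℝ) < R + h := by linarith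
  have hrpow_add : ∀ s t : ℝ, R ^ s * R ^ t = R ^ (s + t) := fun s t => (Real.rpow_add hRpos s t).symm
  -- split the integral
  set I := ∫ t in Set.Ioc (-(R+h)) (-R), v t ^ 2 with hIdef
  have hIco_int : IntegrableOn (fun t => v t ^ 2) (Set.Ico (-(R+h)) (-R)) :=
    (hvc.pow 2).integrableOn_Icc.mono_set Set.Ico_subset_Icc_self
  have hsplit : (∫ t in Set.Iio (-R), v t ^ 2) = (∫ t in Set.Iio (-(R+h)), v t ^ 2) + I := by
    have hu : Set.Iio (-(R+h)) ∪ Set.Ico (-(R+h)) (-R) = Set.Iio (-R) :=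
      Set.Iio_union_Ico_eq_Iio (by linarith)
    have hd : Disjoint (Set.Iio (-(R+h))) (Set.Ico (-(R+h)) (-R)) := by
      apply Set.disjoint_left.mpr
      intro t ht1 ht2
      exact absurd ht2.1 (not_le.mpr ht1)
    rw [← hu, setIntegral_union hd measurableSet_Ico ((hint (R+h) hRhR₀).1) hIco_int]
    congr 1
    rw [hIdef, integral_Ico_eq_integral_Ioo, integral_Ioc_eq_integral_Ioo]
  -- estimate 1 : I vs c₀ difference
  have hmono : (R+h) ^ (-(2:ℝ) - a₀) ≤ R ^ (-(2:ℝ) - a₀) :=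
    Real.rpow_le_rpow_of_nonpos hRpos (by linarith) (by linarith)
  have est1 : |I - c₀ * (R ^ (-(2:ℝ)) - (R+h) ^ (-(2:ℝ)))| ≤ 2 * C * R ^ (-(2:ℝ) - a₀) := by
    have b1 := hL2 R hRR₀
    have b2 := hL2 (R+h) hRhR₀
    rw [abs_le] at b1 b2 ⊢
    constructor <;> [nlinarith [b1.1, b1.2, b2.1, b2.2, hmono, hsplit];
      nlinarith [b1.1, b1.2, b2.1, b2.2, hmono, hsplit]]
  -- estimate 2 : Taylor
  have est2 : |c₀ * (R ^ (-(2:ℝ)) - (R+h) ^ (-(2:ℝ))) - 2 * c₀ * h * R ^ (-(3:ℝ))|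
      ≤ 5 * c₀ * h ^ 2 * R ^ (-(4:ℝ)) := by
    have e0 : c₀ * (R ^ (-(2:ℝ)) - (R+h) ^ (-(2:ℝ))) - 2 * c₀ * h * R ^ (-(3:ℝ))
        = c₀ * (R ^ (-(2:ℝ)) - (R+h) ^ (-(2:ℝ)) - 2 * h * R ^ (-(3:ℝ))) := by ring
    rw [e0, abs_mul, abs_of_nonneg hc₀.le]
    calc c₀ * |R ^ (-(2:ℝ)) - (R+h) ^ (-(2:ℝ)) - 2 * h * R ^ (-(3:ℝ))|
        ≤ c₀ * (5 * h ^ 2 * R ^ (-(4:ℝ))) :=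
          mul_le_mul_of_nonneg_left (taylor_aux hRpos hhpos hhR) hc₀.le
      _ = 5 * c₀ * h ^ 2 * R ^ (-(4:ℝ)) := by ring
  -- exponent computations
  have e1 : h * R ^ (-(3:ℝ)) = R ^ (-(2:ℝ) - 2*a₀/3) := by
    rw [hh, hrpow_add]; congr 1; rw [he]; ring
  have e2 : h ^ 2 * R ^ (-(4:ℝ)) = R ^ (2*e - 4) := by
    rw [hh, ← Real.rpow_natCast (R ^ e) 2, ← Real.rpow_mul hRpos.le, hrpow_add]
    congr 1; push_cast; ring
  have e2' : h ^ 2 * R ^ (-(4:ℝ)) ≤ R ^ (-(2:ℝ) - 2*a₀/3) := by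
    rw [e2]
    exact Real.rpow_le_rpow_of_exponent_le hR1 (by rw [he]; linarith)
  have e3 : R ^ (-(2:ℝ) - a₀) ≤ R ^ (-(2:ℝ) - 2*a₀/3) :=
    Real.rpow_le_rpow_of_exponent_le hR1 (by linarith)
  -- upper bound for I
  have hIub : I ≤ K * R ^ (-(2:ℝ) - 2*a₀/3) := by
    have h1 : I ≤ c₀ * (R ^ (-(2:ℝ)) - (R+h) ^ (-(2:ℝ))) + 2 * C * R ^ (-(2:ℝ) - a₀) := by
      have := (abs_le.mp est1).2; linarith
    have h2 : c₀ * (R ^ (-(2:ℝ)) - (R+h) ^ (-(2:ℝ)))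
        ≤ 2*c₀*h*R^(-(3:ℝ)) + 5*c₀*h^2*R^(-(4:ℝ)) := by
      have := (abs_le.mp est2).2; linarith
    have t1 : 2*c₀*h*R^(-(3:ℝ)) = 2*c₀*R^(-(2:ℝ) - 2*a₀/3) := by
      rw [show 2*c₀*h*R^(-(3:ℝ)) = 2*c₀*(h*R^(-(3:ℝ))) by ring, e1]
    have t2 : 5*c₀*h^2*R^(-(4:ℝ)) ≤ 5*c₀*R^(-(2:ℝ) - 2*a₀/3) := by
      have := mul_le_mul_of_nonneg_left e2' (by positivity : (0:ℝ) ≤ 5*c₀)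
      linarith
    have t3 : 2*C*R^(-(2:ℝ)-a₀) ≤ 2*C*R^(-(2:ℝ) - 2*a₀/3) := by
      have := mul_le_mul_of_nonneg_left e3 (by positivity : (0:ℝ) ≤ 2*C)
      linarith
    have t4 : K * R ^ (-(2:ℝ) - 2*a₀/3) = 2*c₀*R^(-(2:ℝ) - 2*a₀/3)
        + 5*c₀*R^(-(2:ℝ) - 2*a₀/3) + 2*C*R^(-(2:ℝ) - 2*a₀/3) := by rw [hK]; ring
    linarith
  -- pointwise bound
  set D := 2 * (Real.sqrt I * Real.sqrt (C * R ^ (-(4:ℝ)))) with hD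
  have hpt : ∀ t ∈ Set.Ioc (-(R+h)) (-R), |v t ^ 2 - v (-R) ^ 2| ≤ D := by
    intro t ht
    refine le_trans (ptwise_aux v hv ht.2) ?_
    rw [hD]
    have m1 : (∫ s in Set.Ioc t (-R), v s ^ 2) ≤ I :=
      setIntegral_mono_set ((hvc.pow 2).integrableOn_Ioc)
        (Filter.Eventually.of_forall fun s => sq_nonneg _)
        (HasSubset.Subset.eventuallyLE (Set.Ioc_subset_Ioc_left ht.1.le))
    have m2 : (∫ s in Set.Ioc t (-R), deriv v s ^ 2) ≤ C * R ^ (-(4:ℝ)) := by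
      have sub : Set.Ioc t (-R) ≤ᵐ[volume] Set.Iio (-R) := by
        rw [MeasureTheory.ae_le_set]
        refine measure_mono_null (fun s hs => ?_) (measure_singleton (-R))
        simp only [Set.mem_diff, Set.mem_Ioc, Set.mem_Iio, not_lt] at hs
        have : s = -R := le_antisymm hs.1.2 hs.2
        simp [this]
      calc (∫ s in Set.Ioc t (-R), deriv v s ^ 2)
          ≤ ∫ s in Set.Iio (-R), deriv v s ^ 2 :=
            setIntegral_mono_set (hint R hRR₀).2
              (Filter.Eventually.of_forall fun s => sq_nonneg _) sub
        _ ≤ C * R ^ (-(4:ℝ)) := hL2' R hRR₀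
    exact mul_le_mul_of_nonneg_left
      (mul_le_mul (Real.sqrt_le_sqrt m1) (Real.sqrt_le_sqrt m2)
        (Real.sqrt_nonneg _) (Real.sqrt_nonneg _)) two_pos.le
  -- averaging
  have hIoc_vol : volume (Set.Ioc (-(R+h)) (-R)) = ENNReal.ofReal h := by
    rw [Real.volume_Ioc]; congr 1; ring
  have havg : |I - h * v (-R) ^ 2| ≤ D * h := by
    have hconst : (∫ _ in Set.Ioc (-(R+h)) (-R), v (-R) ^ 2) = h * v (-R) ^ 2 := by
      rw [setIntegral_const, measureReal_def, hIoc_vol, ENNReal.toReal_ofReal hhpos.le, smul_eq_mul]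
    have hdiff : I - h * v (-R) ^ 2
        = ∫ t in Set.Ioc (-(R+h)) (-R), (v t ^ 2 - v (-R) ^ 2) := by
      rw [integral_sub (μ := volume.restrict (Set.Ioc (-(R+h)) (-R))) (g := fun _ => v (-R) ^ 2) (show Integrable (fun t => v t ^ 2) (volume.restrict (Set.Ioc (-(R+h)) (-R))) from (hvc.pow 2).integrableOn_Ioc)
        (show Integrable (fun _ => v (-R) ^ 2) (volume.restrict (Set.Ioc (-(R+h)) (-R))) from
          integrableOn_const (μ := volume) (s := Set.Ioc (-(R+h)) (-R)) (C := v (-R) ^ 2)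
          (by rw [hIoc_vol]; exact ENNReal.ofReal_ne_top)),
        hconst, hIdef]
    have hb := norm_setIntegral_le_of_norm_le_const (μ := volume)
      (s := Set.Ioc (-(R+h)) (-R)) (C := D)
      (by rw [hIoc_vol]; exact ENNReal.ofReal_lt_top)
      (fun t ht => by rw [Real.norm_eq_abs]; exact hpt t ht)
    rw [hdiff, ← Real.norm_eq_abs]
    calc ‖∫ t in Set.Ioc (-(R+h)) (-R), (v t ^ 2 - v (-R) ^ 2)‖
        ≤ D * (volume (Set.Ioc (-(R+h)) (-R))).toReal := hb
      _ = D * h := by rw [hIoc_vol, ENNReal.toReal_ofReal hhpos.le]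
  -- bound on D
  have sqrt_rpow : ∀ y : ℝ, Real.sqrt (R ^ y) = R ^ (y/2) := by
    intro y
    rw [Real.sqrt_eq_rpow, ← Real.rpow_mul hRpos.le]
    congr 1; ring
  have hDub : D ≤ 2 * Real.sqrt K * Real.sqrt C * R ^ (-(3:ℝ) - a₀/3) := by
    have s1 : Real.sqrt I ≤ Real.sqrt K * R ^ ((-(2:ℝ) - 2*a₀/3)/2) := by
      calc Real.sqrt I ≤ Real.sqrt (K * R ^ (-(2:ℝ) - 2*a₀/3)) := Real.sqrt_le_sqrt hIub
        _ = Real.sqrt K * Real.sqrt (R ^ (-(2:ℝ) - 2*a₀/3)) := Real.sqrt_mul hKpos.le _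
        _ = Real.sqrt K * R ^ ((-(2:ℝ) - 2*a₀/3)/2) := by rw [sqrt_rpow]
    have s2 : Real.sqrt (C * R ^ (-(4:ℝ))) = Real.sqrt C * R ^ (-(2:ℝ)) := by
      rw [Real.sqrt_mul hC.le, sqrt_rpow]
      norm_num
    have s3 : R ^ ((-(2:ℝ) - 2*a₀/3)/2) * R ^ (-(2:ℝ)) = R ^ (-(3:ℝ) - a₀/3) := by
      rw [hrpow_add]; congr 1; ring
    calc D ≤ 2 * ((Real.sqrt K * R ^ ((-(2:ℝ) - 2*a₀/3)/2)) * (Real.sqrt C * R ^ (-(2:ℝ)))) := by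
          rw [hD, s2]
          refine mul_le_mul_of_nonneg_left (mul_le_mul_of_nonneg_right s1 ?_) two_pos.le
          positivity
      _ = 2 * Real.sqrt K * Real.sqrt C * (R ^ ((-(2:ℝ) - 2*a₀/3)/2) * R ^ (-(2:ℝ))) := by ring
      _ = 2 * Real.sqrt K * Real.sqrt C * R ^ (-(3:ℝ) - a₀/3) := by rw [s3]
  -- final assembly
  have key : (v (-R) ^ 2 - 2 * c₀ * R ^ (-(3:ℝ))) * h
      = (h * v (-R) ^ 2 - I) + (I - c₀ * (R ^ (-(2:ℝ)) - (R+h) ^ (-(2:ℝ))))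
        + (c₀ * (R ^ (-(2:ℝ)) - (R+h) ^ (-(2:ℝ))) - 2 * c₀ * h * R ^ (-(3:ℝ))) := by ring
  have final1 : |v (-R) ^ 2 - 2 * c₀ * R ^ (-(3:ℝ))| * h
      ≤ D * h + 2*C*R^(-(2:ℝ)-a₀) + 5*c₀*h^2*R^(-(4:ℝ)) := by
    have t1 : |h * v (-R) ^ 2 - I| ≤ D * h := abs_sub_comm I (h * v (-R)^2) ▸ havg
    calc |v (-R) ^ 2 - 2 * c₀ * R ^ (-(3:ℝ))| * h
        = |(v (-R) ^ 2 - 2 * c₀ * R ^ (-(3:ℝ))) * h| := by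
          rw [abs_mul, abs_of_nonneg hhpos.le]
      _ ≤ |h * v (-R) ^ 2 - I| + |I - c₀ * (R ^ (-(2:ℝ)) - (R+h) ^ (-(2:ℝ)))|
          + |c₀ * (R ^ (-(2:ℝ)) - (R+h) ^ (-(2:ℝ))) - 2 * c₀ * h * R ^ (-(3:ℝ))| := by
          rw [key]
          exact (abs_add_le _ _).trans (add_le_add_left (abs_add_le _ _) _)
      _ ≤ D * h + 2*C*R^(-(2:ℝ)-a₀) + 5*c₀*h^2*R^(-(4:ℝ)) := by
          exact add_le_add (add_le_add t1 est1) est2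
  have t2 : R ^ (-(2:ℝ)-a₀) = R ^ (-(3:ℝ)-a₀/3) * h := by
    rw [hh, hrpow_add]; congr 1; rw [he]; ring
  have t3 : h^2 * R^(-(4:ℝ)) ≤ R ^ (-(3:ℝ)-a₀/3) * h := by
    rw [e2, ← t2]
    exact Real.rpow_le_rpow_of_exponent_le hR1 (by rw [he]; linarith)
  have final2 : D * h + 2*C*R^(-(2:ℝ)-a₀) + 5*c₀*h^2*R^(-(4:ℝ))
      ≤ (2 * Real.sqrt K * Real.sqrt C + 2 * C + 5 * c₀) * R ^ (-(3:ℝ) - a₀/3) * h := by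
    have u1 : D * h ≤ 2 * Real.sqrt K * Real.sqrt C * R ^ (-(3:ℝ) - a₀/3) * h :=
      mul_le_mul_of_nonneg_right hDub hhpos.le
    have u2 : 2*C*R^(-(2:ℝ)-a₀) = 2*C*(R ^ (-(3:ℝ)-a₀/3) * h) := by rw [t2]
    have u3 : 5*c₀*(h^2*R^(-(4:ℝ))) ≤ 5*c₀*(R ^ (-(3:ℝ)-a₀/3) * h) :=
      mul_le_mul_of_nonneg_left t3 (by positivity)
    nlinarith [u1, u2, u3]
  have hfin := le_trans final1 final2
  exact le_of_mul_le_mul_right hfin hhpos
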